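/- arXiv:2111.01021 — 4 statements merged into one kernel-verified Lean document; each statement's English description precedes it below -/
import Mathlib

section
/- Let v = (v₁, v₂) ∈ ℚ² ∖ ℤ² and let τ ∈ ℍ satisfy |q_τ| = |e^{2πiτ}| ≤ e^{−π√3}. Then |g_v(τ)| < 2.29 · |q_τ|^{−1/24}. -/
open Complex

/-- The Siegel function `g_v(τ)` for a row vector `v = (v₁, v₂) ∈ ℚ²`, given by the
infinite product
`g_v(τ) = -e^{πi v₂(v₁-1)} q_τ^{(1/2)(v₁²-v₁+1/6)} (1-q_z) ∏_{n≥1} (1-q_τⁿ q_z)(1-q_τⁿ q_z⁻¹)`,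
where `q_τ^r = e^{2πirτ}` and `q_z = e^{2πiz}` with `z = v₁τ + v₂`. -/
noncomputable def siegelFunction (v : ℚ × ℚ) (τ : ℂ) : ℂ :=
  let z : ℂ := (v.1 : ℂ) * τ + (v.2 : ℂ);
  let qz : ℂ := Complex.exp (2 * (Real.pi : ℂ) * Complex.I * z);
  let qτ : ℂ := Complex.exp (2 * (Real.pi : ℂ) * Complex.I * τ);
  (-Complex.exp ((Real.pi : ℂ) * Complex.I * (v.2 : ℂ) * ((v.1 : ℂ) - 1))) *
    Complex.exp (2 * (Real.pi : ℂ) * Complex.I *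
      ((1 / 2 : ℂ) * ((v.1 : ℂ) ^ 2 - (v.1 : ℂ) + 1 / 6)) * τ) *
    (1 - qz) *
    ∏' n : ℕ, ((1 - qτ ^ (n + 1) * qz) * (1 - qτ ^ (n + 1) * qz⁻¹))


section SiegelAuxLemmas


/-- comparison of infinite products of nonnegative reals -/
private lemma tprod_le_tprod_real {f g : ℕ → ℝ} (h0 : ∀ i, 0 ≤ f i) (h : ∀ i, f i ≤ g i)
    (hf : Multipliable f) (hg : Multipliable g) : ∏' i, f i ≤ ∏' i, g i := by
  refine le_of_tendsto_of_tendsto' hf.hasProd hg.hasProd fun s => ?_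
  exact Finset.prod_le_prod (fun i _ => h0 i) (fun i _ => h i)

private lemma one_le_tprod_real {f : ℕ → ℝ} (h1 : ∀ i, 1 ≤ f i) : 1 ≤ ∏' i, f i := by
  by_cases hf : Multipliable f
  · refine ge_of_tendsto' hf.hasProd fun s => ?_
    calc (1:ℝ) = ∏ _i ∈ s, 1 := by simp
      _ ≤ ∏ i ∈ s, f i := Finset.prod_le_prod (by simp) (fun i _ => h1 i)
  · rw [tprod_eq_one_of_not_multipliable hf]

private lemma siegel_aux_eq {x : ℝ} (hx0 : 0 < x) (s : ℝ) :
    (fun n : ℕ => x ^ ((n : ℝ) + s)) = fun n : ℕ => x ^ s * x ^ n := by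
  funext n
  rw [Real.rpow_add hx0, mul_comm, Real.rpow_natCast]

private lemma siegel_aux_summable {x : ℝ} (hx0 : 0 < x) (hx1 : x < 1) (s : ℝ) :
    Summable (fun n : ℕ => x ^ ((n : ℝ) + s)) := by
  rw [siegel_aux_eq hx0 s]
  exact (summable_geometric_of_lt_one hx0.le hx1).mul_left _

/-- the auxiliary product `A(s) = ∏ (1 + x^(n+s))` -/
noncomputable def siegelA (x s : ℝ) : ℝ := ∏' n : ℕ, (1 + x ^ ((n : ℝ) + s))

private lemma siegel_multipliable {x : ℝ} (hx0 : 0 < x) (hx1 : x < 1) (s : ℝ) :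
    Multipliable (fun n : ℕ => 1 + x ^ ((n : ℝ) + s)) := by
  refine Real.multipliable_of_summable_log (fun n => by positivity) ?_
  refine Summable.of_nonneg_of_le
    (fun n => Real.log_nonneg (by have := Real.rpow_nonneg hx0.le ((n:ℝ)+s); linarith))
    (fun n => ?_) (siegel_aux_summable hx0 hx1 s)
  have h := Real.log_le_sub_one_of_pos (x := 1 + x ^ ((n : ℝ) + s)) (by positivity)
  linarith

private lemma one_le_siegelA {x : ℝ} (hx0 : 0 < x) (s : ℝ) : 1 ≤ siegelA x s :=
  one_le_tprod_real fun n => by nlinarith [Real.rpow_nonneg hx0.le ((n:ℝ)+s)]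

set_option maxHeartbeats 1000000 in
private lemma siegelA_succ {x : ℝ} (hx0 : 0 < x) (hx1 : x < 1) (s : ℝ) :
    siegelA x s = (1 + x ^ s) * siegelA x (s + 1) := by
  have hm : Multipliable (fun n : ℕ => 1 + x ^ ((((n + 1 : ℕ)) : ℝ) + s)) :=
    (siegel_multipliable hx0 hx1 (s + 1)).congr fun n => by congr 1; push_cast; ring
  rw [siegelA, tprod_eq_zero_mul' hm]
  congr 1
  · norm_num
  · rw [siegelA]
    exact tprod_congr fun n => by congr 1; push_cast; ring

private lemma siegelA_le {x : ℝ} (hx0 : 0 < x) (hx1 : x < 1) (s : ℝ) :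
    siegelA x s ≤ Real.exp (x ^ s * (1 - x)⁻¹) := by
  have hs : HasSum (fun n : ℕ => x ^ ((n : ℝ) + s)) (x ^ s * (1 - x)⁻¹) := by
    rw [siegel_aux_eq hx0 s]
    simpa [tsum_geometric_of_lt_one hx0.le hx1] using
      (hasSum_geometric_of_lt_one hx0.le hx1).mul_left (x ^ s)
  have hp : HasProd (fun n : ℕ => Real.exp (x ^ ((n : ℝ) + s))) (Real.exp (x ^ s * (1 - x)⁻¹)) :=
    hs.rexp
  calc siegelA x s ≤ ∏' n : ℕ, Real.exp (x ^ ((n : ℝ) + s)) := by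
        refine tprod_le_tprod_real (fun n => by positivity)
          (fun n => by have := Real.add_one_le_exp (x ^ ((n : ℝ) + s)); linarith)
          (siegel_multipliable hx0 hx1 s) hp.multipliable
    _ = Real.exp (x ^ s * (1 - x)⁻¹) := hp.tprod_eq

/-- the translation-invariant bound function -/
noncomputable def siegelF (x s : ℝ) : ℝ := x ^ ((s ^ 2 - s) / 2) * (siegelA x s * siegelA x (1 - s))

private lemma siegelF_succ {x : ℝ} (hx0 : 0 < x) (hx1 : x < 1) (s : ℝ) :
    siegelF x (s + 1) = siegelF x s := by
  have hpos : (0 : ℝ) < 1 + x ^ s := by positivity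
  refine mul_left_cancel₀ hpos.ne' ?_
  have e1 : siegelA x s = (1 + x ^ s) * siegelA x (s + 1) := siegelA_succ hx0 hx1 s
  have e2 : siegelA x (-s) = (1 + x ^ (-s)) * siegelA x (1 - s) := by
    have := siegelA_succ hx0 hx1 (-s)
    rwa [show -s + 1 = 1 - s from by ring] at this
  have hexp1 : ((s + 1) ^ 2 - (s + 1)) / 2 = (s ^ 2 + s) / 2 := by ring
  have hexp2 : (1 : ℝ) - (s + 1) = -s := by ring
  rw [siegelF, siegelF, hexp1, hexp2, e2, e1]
  have key : x ^ ((s ^ 2 + s) / 2) * (1 + x ^ (-s)) = x ^ ((s ^ 2 - s) / 2) * (1 + x ^ s) := by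
    rw [mul_add, mul_add, mul_one, mul_one, ← Real.rpow_add hx0, ← Real.rpow_add hx0]
    rw [show (s ^ 2 + s) / 2 + -s = (s ^ 2 - s) / 2 from by ring,
      show (s ^ 2 - s) / 2 + s = (s ^ 2 + s) / 2 from by ring]
    ring
  linear_combination ((1 + x ^ s) * siegelA x (s + 1) * siegelA x (1 - s)) * key

private lemma siegelF_int {x : ℝ} (hx0 : 0 < x) (hx1 : x < 1) (s : ℝ) (k : ℤ) :
    siegelF x (s + k) = siegelF x s := by
  induction k using Int.induction_on with
  | zero => norm_num
  | succ n ih =>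
      push_cast at ih ⊢
      rw [show s + ((n : ℝ) + 1) = (s + (n : ℝ)) + 1 from by ring, siegelF_succ hx0 hx1, ih]
  | pred n ih =>
      push_cast at ih ⊢
      have h := siegelF_succ hx0 hx1 (s + (-(n : ℝ) - 1))
      rw [show s + (-(n : ℝ) - 1) + 1 = s + -(n : ℝ) from by ring] at h
      calc siegelF x (s + (-(n : ℝ) - 1)) = siegelF x (s + -(n : ℝ)) := h.symm
        _ = siegelF x s := ih


private lemma siegelF_lt {x : ℝ} (hx0 : 0 < x) (hx : x ≤ 0.01) {t : ℝ} (ht0 : 0 ≤ t)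
    (ht1 : t < 1) : siegelF x t < 2.29 * x ^ (-(1/8 : ℝ)) := by
  have hx1 : x < 1 := lt_of_le_of_lt hx (by norm_num)
  set E : ℝ := Real.exp (x * (1 - x)⁻¹) with hEdef
  have hE0 : 0 < E := Real.exp_pos _
  have hF : siegelF x t ≤ x ^ (-(1/8 : ℝ)) * ((1 + x ^ t) * E * ((1 + x ^ (1 - t)) * E)) := by
    rw [siegelF, siegelA_succ hx0 hx1 t, siegelA_succ hx0 hx1 (1 - t)]
    have h1 : x ^ ((t ^ 2 - t) / 2) ≤ x ^ (-(1/8) : ℝ) :=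
      Real.rpow_le_rpow_of_exponent_ge hx0 hx1.le (by nlinarith [sq_nonneg (t - 1/2)])
    have hA1 : siegelA x (t + 1) ≤ E := by
      refine (siegelA_le hx0 hx1 (t + 1)).trans ?_
      rw [hEdef]
      apply Real.exp_le_exp.mpr
      have hle : x ^ (t + 1 : ℝ) ≤ x := by
        have := Real.rpow_le_rpow_of_exponent_ge hx0 hx1.le (show (1:ℝ) ≤ t + 1 by linarith)
        rwa [Real.rpow_one] at this
      have : (0:ℝ) ≤ (1 - x)⁻¹ := inv_nonneg.mpr (by linarith)
      exact mul_le_mul_of_nonneg_right hle this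
    have hA2 : siegelA x (1 - t + 1) ≤ E := by
      refine (siegelA_le hx0 hx1 (1 - t + 1)).trans ?_
      rw [hEdef]
      apply Real.exp_le_exp.mpr
      have hle : x ^ (1 - t + 1 : ℝ) ≤ x := by
        have := Real.rpow_le_rpow_of_exponent_ge hx0 hx1.le (show (1:ℝ) ≤ 1 - t + 1 by linarith)
        rwa [Real.rpow_one] at this
      have : (0:ℝ) ≤ (1 - x)⁻¹ := inv_nonneg.mpr (by linarith)
      exact mul_le_mul_of_nonneg_right hle this
    have h1A : (0:ℝ) ≤ 1 + x ^ t := by positivity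
    have h1B : (0:ℝ) ≤ 1 + x ^ (1 - t) := by positivity
    have hApos : (0:ℝ) ≤ siegelA x (t + 1) := le_trans zero_le_one (one_le_siegelA hx0 _)
    have hBpos : (0:ℝ) ≤ siegelA x (1 - t + 1) := le_trans zero_le_one (one_le_siegelA hx0 _)
    calc x ^ ((t ^ 2 - t) / 2) * ((1 + x ^ t) * siegelA x (t + 1) *
          ((1 + x ^ (1 - t)) * siegelA x (1 - t + 1)))
        ≤ x ^ (-(1/8) : ℝ) * ((1 + x ^ t) * siegelA x (t + 1) *
          ((1 + x ^ (1 - t)) * siegelA x (1 - t + 1))) := by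
          apply mul_le_mul_of_nonneg_right h1 (by positivity)
      _ ≤ x ^ (-(1/8) : ℝ) * ((1 + x ^ t) * E * ((1 + x ^ (1 - t)) * E)) := by
          apply mul_le_mul_of_nonneg_left _ (by positivity)
          exact mul_le_mul (mul_le_mul_of_nonneg_left hA1 h1A)
            (mul_le_mul_of_nonneg_left hA2 h1B) (by positivity)
            (by positivity)
  -- numeric estimate
  have ha : x ^ t ≤ 1 := Real.rpow_le_one hx0.le hx1.le ht0
  have hb : x ^ (1 - t) ≤ 1 := Real.rpow_le_one hx0.le hx1.le (by linarith)
  have ha0 : 0 ≤ x ^ t := Real.rpow_nonneg hx0.le _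
  have hb0 : 0 ≤ x ^ (1 - t) := Real.rpow_nonneg hx0.le _
  have hab : x ^ t * x ^ (1 - t) = x := by
    rw [← Real.rpow_add hx0, show t + (1 - t) = 1 from by ring, Real.rpow_one]
  set u : ℝ := x * (1 - x)⁻¹ with hudef
  have hu0 : 0 ≤ u := mul_nonneg hx0.le (inv_nonneg.mpr (by linarith))
  have hux : u * (1 - x) = x := by
    rw [hudef, mul_assoc, inv_mul_cancel₀ (show (1:ℝ) - x ≠ 0 by linarith), mul_one]
  have hu : u ≤ 0.0102 := by nlinarith
  have hE2 : E * E * (1 - (u + u)) ≤ 1 := by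
    have hle : 1 - (u + u) ≤ Real.exp (-(u + u)) := by
      have := Real.add_one_le_exp (-(u + u)); linarith
    calc E * E * (1 - (u + u)) ≤ E * E * Real.exp (-(u + u)) := by
          apply mul_le_mul_of_nonneg_left hle (by positivity)
      _ = 1 := by
          rw [hEdef, ← Real.exp_add, ← Real.exp_add, ← Real.exp_zero]
          congr 1; ring
  have hEbound : E * E ≤ 1.0209 := by nlinarith
  have hmain : (1 + x ^ t) * E * ((1 + x ^ (1 - t)) * E) < 2.29 := by nlinarith
  have hxp : (0:ℝ) < x ^ (-(1/8) : ℝ) := Real.rpow_pos_of_pos hx0 _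
  calc siegelF x t ≤ x ^ (-(1/8 : ℝ)) * ((1 + x ^ t) * E * ((1 + x ^ (1 - t)) * E)) := hF
    _ < x ^ (-(1/8 : ℝ)) * 2.29 := by
        exact mul_lt_mul_of_pos_left hmain hxp
    _ = 2.29 * x ^ (-(1/8 : ℝ)) := by ring

end SiegelAuxLemmas

private lemma abs_exp_mul_I (r : ℝ) (w : ℂ) :
    ‖Complex.exp ((r : ℂ) * Complex.I * w)‖ = Real.exp (-(r * w.im)) := by
  rw [Complex.norm_exp]
  congr 1
  simp [Complex.mul_re, Complex.mul_im]

set_option maxHeartbeats 1000000 in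
theorem siegel_abs_lt (v : ℚ × ℚ) (hv : ¬∃ m n : ℤ, v.1 = (m : ℚ) ∧ v.2 = (n : ℚ))
    (τ : ℂ) (hτ : 0 < τ.im)
    (hq : ‖Complex.exp (2 * (Real.pi : ℂ) * Complex.I * τ)‖ ≤
      Real.exp (-Real.pi * Real.sqrt 3)) :
    ‖siegelFunction v τ‖ <
      2.29 * ‖Complex.exp (2 * (Real.pi : ℂ) * Complex.I * τ)‖ ^ (-(1 / 24) : ℝ) := by
  have hπ := Real.pi_gt_three
  set a : ℝ := (v.1 : ℝ) with hadef
  set x : ℝ := Real.exp (-(2 * Real.pi * τ.im)) with hxdef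
  have hx0 : 0 < x := Real.exp_pos _
  have hx1 : x < 1 := by
    rw [hxdef, ← Real.exp_zero]
    apply Real.exp_lt_exp.mpr
    nlinarith
  have hxr : ∀ r : ℝ, x ^ r = Real.exp (-(2 * Real.pi * τ.im) * r) := fun r => by
    rw [Real.rpow_def_of_pos hx0, hxdef, Real.log_exp]
  -- |q_τ| = x
  have habsq : ‖Complex.exp (2 * (Real.pi : ℂ) * Complex.I * τ)‖ = x := by
    rw [show (2 * (Real.pi : ℂ) * Complex.I * τ) = ((2 * Real.pi : ℝ) : ℂ) * Complex.I * τ by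
      push_cast; ring, abs_exp_mul_I, hxdef]
  -- x is small
  have hsqrt : (5 / 3 : ℝ) < Real.sqrt 3 := by
    have h2 : ((5:ℝ) / 3) ^ 2 < 3 := by norm_num
    nlinarith [Real.sq_sqrt (show (0:ℝ) ≤ 3 by norm_num), Real.sqrt_nonneg 3]
  have hx001 : x ≤ 0.01 := by
    have h5 : (5 : ℝ) < Real.pi * Real.sqrt 3 := by nlinarith [Real.sqrt_nonneg 3]
    have he5 : (100 : ℝ) < Real.exp 5 := by
      have h1 : Real.exp 5 = Real.exp 1 ^ (5 : ℕ) := by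
        rw [← Real.exp_nat_mul]; norm_num
      have h2 : (2.7 : ℝ) ≤ Real.exp 1 := le_of_lt (lt_trans (by norm_num) Real.exp_one_gt_d9)
      have h3 : (2.7 : ℝ) ^ (5:ℕ) ≤ Real.exp 1 ^ (5:ℕ) := pow_le_pow_left₀ (by norm_num) h2 5
      rw [h1]
      calc (100:ℝ) < 2.7 ^ (5:ℕ) := by norm_num
        _ ≤ Real.exp 1 ^ (5:ℕ) := h3
    have hneg : Real.exp (-Real.pi * Real.sqrt 3) ≤ Real.exp (-5) := by
      apply Real.exp_le_exp.mpr; linarith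
    have hmul : Real.exp (-5) * Real.exp 5 = 1 := by
      rw [← Real.exp_add]; norm_num
    have h001 : Real.exp (-5) ≤ 0.01 := by nlinarith [Real.exp_pos (-5)]
    calc x = ‖Complex.exp (2 * (Real.pi : ℂ) * Complex.I * τ)‖ := habsq.symm
      _ ≤ Real.exp (-Real.pi * Real.sqrt 3) := hq
      _ ≤ Real.exp (-5) := hneg
      _ ≤ 0.01 := h001
  -- |q_z| = x ^ a
  have him : ((v.1 : ℂ) * τ + (v.2 : ℂ)).im = a * τ.im := by
    simp [Complex.add_im, Complex.mul_im, hadef]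
  have hqz : ‖Complex.exp (2 * (Real.pi : ℂ) * Complex.I *
      ((v.1 : ℂ) * τ + (v.2 : ℂ)))‖ = x ^ a := by
    rw [show (2 * (Real.pi : ℂ) * Complex.I * ((v.1 : ℂ) * τ + (v.2 : ℂ)))
        = ((2 * Real.pi : ℝ) : ℂ) * Complex.I * ((v.1 : ℂ) * τ + (v.2 : ℂ)) by push_cast; ring,
      abs_exp_mul_I, him, hxr]
    congr 1; ring
  have hqzinv : ‖(Complex.exp (2 * (Real.pi : ℂ) * Complex.I *
      ((v.1 : ℂ) * τ + (v.2 : ℂ))))⁻¹‖ = x ^ (-a) := by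
    rw [norm_inv, hqz, ← Real.rpow_neg hx0.le]
  -- unfold the Siegel function
  have hsf : siegelFunction v τ =
      (-Complex.exp ((Real.pi : ℂ) * Complex.I * (v.2 : ℂ) * ((v.1 : ℂ) - 1))) *
        Complex.exp (2 * (Real.pi : ℂ) * Complex.I *
          ((1 / 2 : ℂ) * ((v.1 : ℂ) ^ 2 - (v.1 : ℂ) + 1 / 6)) * τ) *
        (1 - Complex.exp (2 * (Real.pi : ℂ) * Complex.I * ((v.1 : ℂ) * τ + (v.2 : ℂ)))) *
        ∏' n : ℕ, ((1 - Complex.exp (2 * (Real.pi : ℂ) * Complex.I * τ) ^ (n + 1) *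
            Complex.exp (2 * (Real.pi : ℂ) * Complex.I * ((v.1 : ℂ) * τ + (v.2 : ℂ)))) *
          (1 - Complex.exp (2 * (Real.pi : ℂ) * Complex.I * τ) ^ (n + 1) *
            (Complex.exp (2 * (Real.pi : ℂ) * Complex.I * ((v.1 : ℂ) * τ + (v.2 : ℂ))))⁻¹)) := rfl
  -- prefactor absolute values
  have hpref1 : ‖-Complex.exp ((Real.pi : ℂ) * Complex.I * (v.2 : ℂ) *
      ((v.1 : ℂ) - 1))‖ = 1 := by
    rw [norm_neg, show ((Real.pi : ℂ) * Complex.I * (v.2 : ℂ) * ((v.1 : ℂ) - 1))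
      = ((Real.pi * (v.2 : ℝ) * ((v.1 : ℝ) - 1) : ℝ) : ℂ) * Complex.I by push_cast; ring,
      Complex.norm_exp_ofReal_mul_I]
  have hpref2 : ‖Complex.exp (2 * (Real.pi : ℂ) * Complex.I *
      ((1 / 2 : ℂ) * ((v.1 : ℂ) ^ 2 - (v.1 : ℂ) + 1 / 6)) * τ)‖ = x ^ ((a ^ 2 - a + 1/6) / 2) := by
    rw [show (2 * (Real.pi : ℂ) * Complex.I * ((1 / 2 : ℂ) * ((v.1 : ℂ) ^ 2 - (v.1 : ℂ) + 1 / 6)) * τ)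
        = ((2 * Real.pi * ((a ^ 2 - a + 1/6) / 2) : ℝ) : ℂ) * Complex.I * τ by
        rw [hadef]; push_cast; ring,
      abs_exp_mul_I, hxr]
    congr 1; ring
  -- bound |1 - q_z|
  have habs_sub : ∀ w : ℂ, ‖1 - w‖ ≤ 1 + ‖w‖ := fun w => by
    calc ‖1 - w‖ = ‖1 - w‖ := rfl
      _ ≤ ‖(1 : ℂ)‖ + ‖w‖ := norm_sub_le _ _
      _ = 1 + ‖w‖ := by rw [norm_one]
  have hqz1 : ‖1 - Complex.exp (2 * (Real.pi : ℂ) * Complex.I *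
      ((v.1 : ℂ) * τ + (v.2 : ℂ)))‖ ≤ 1 + x ^ a := by
    refine (habs_sub _).trans ?_
    rw [hqz]
  -- bounds on product terms
  have hqpow : ∀ n : ℕ, ‖Complex.exp (2 * (Real.pi : ℂ) * Complex.I * τ) ^ (n + 1)‖
      = x ^ ((n : ℝ) + 1) := fun n => by
    rw [norm_pow, habsq, ← Real.rpow_natCast]
    congr 1
    push_cast; ring
  have hterm1 : ∀ n : ℕ, ‖1 - Complex.exp (2 * (Real.pi : ℂ) * Complex.I * τ) ^ (n + 1) *
      Complex.exp (2 * (Real.pi : ℂ) * Complex.I * ((v.1 : ℂ) * τ + (v.2 : ℂ)))‖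
      ≤ 1 + x ^ ((n : ℝ) + (1 + a)) := fun n => by
    refine (habs_sub _).trans ?_
    rw [norm_mul, hqpow, hqz, ← Real.rpow_add hx0,
      show (n:ℝ) + 1 + a = (n:ℝ) + (1 + a) from by ring]
  have hterm2 : ∀ n : ℕ, ‖1 - Complex.exp (2 * (Real.pi : ℂ) * Complex.I * τ) ^ (n + 1) *
      (Complex.exp (2 * (Real.pi : ℂ) * Complex.I * ((v.1 : ℂ) * τ + (v.2 : ℂ))))⁻¹‖
      ≤ 1 + x ^ ((n : ℝ) + (1 - a)) := fun n => by
    refine (habs_sub _).trans ?_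
    rw [norm_mul, hqpow, hqzinv, ← Real.rpow_add hx0,
      show (n:ℝ) + 1 + -a = (n:ℝ) + (1 - a) from by ring]
  -- bound the infinite product
  have hprod : ‖∏' n : ℕ, ((1 - Complex.exp (2 * (Real.pi : ℂ) * Complex.I * τ) ^ (n + 1) *
        Complex.exp (2 * (Real.pi : ℂ) * Complex.I * ((v.1 : ℂ) * τ + (v.2 : ℂ)))) *
      (1 - Complex.exp (2 * (Real.pi : ℂ) * Complex.I * τ) ^ (n + 1) *
        (Complex.exp (2 * (Real.pi : ℂ) * Complex.I * ((v.1 : ℂ) * τ + (v.2 : ℂ))))⁻¹))‖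
      ≤ siegelA x (1 + a) * siegelA x (1 - a) := by
    have hmb : Multipliable (fun n : ℕ => (1 + x ^ ((n : ℝ) + (1 + a))) * (1 + x ^ ((n : ℝ) + (1 - a)))) :=
      (siegel_multipliable hx0 hx1 (1 + a)).mul (siegel_multipliable hx0 hx1 (1 - a))
    by_cases hm : Multipliable (fun n : ℕ =>
        (1 - Complex.exp (2 * (Real.pi : ℂ) * Complex.I * τ) ^ (n + 1) *
          Complex.exp (2 * (Real.pi : ℂ) * Complex.I * ((v.1 : ℂ) * τ + (v.2 : ℂ)))) *
        (1 - Complex.exp (2 * (Real.pi : ℂ) * Complex.I * τ) ^ (n + 1) *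
          (Complex.exp (2 * (Real.pi : ℂ) * Complex.I * ((v.1 : ℂ) * τ + (v.2 : ℂ))))⁻¹))
    · rw [hm.norm_tprod]
      calc ∏' n : ℕ, ‖_‖
          ≤ ∏' n : ℕ, ((1 + x ^ ((n : ℝ) + (1 + a))) * (1 + x ^ ((n : ℝ) + (1 - a)))) := by
            refine tprod_le_tprod_real (fun n => norm_nonneg _) (fun n => ?_)
              hm.norm hmb
            rw [norm_mul]
            exact mul_le_mul (hterm1 n) (hterm2 n) (norm_nonneg _)
              (by positivity)
        _ = siegelA x (1 + a) * siegelA x (1 - a) :=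
            Multipliable.tprod_mul (siegel_multipliable hx0 hx1 (1 + a)) (siegel_multipliable hx0 hx1 (1 - a))
    · rw [tprod_eq_one_of_not_multipliable hm, norm_one]
      calc (1 : ℝ) = 1 * 1 := by norm_num
        _ ≤ siegelA x (1 + a) * siegelA x (1 - a) :=
            mul_le_mul (one_le_siegelA hx0 _) (one_le_siegelA hx0 _) zero_le_one
              (le_trans zero_le_one (one_le_siegelA hx0 _))
  -- assemble
  have hmainle : ‖siegelFunction v τ‖ ≤ x ^ ((1 : ℝ)/12) * siegelF x a := by
    rw [hsf, norm_mul, norm_mul, norm_mul, hpref1, hpref2, one_mul]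
    calc x ^ ((a ^ 2 - a + 1/6) / 2) *
          ‖1 - Complex.exp (2 * (Real.pi : ℂ) * Complex.I * ((v.1 : ℂ) * τ + (v.2 : ℂ)))‖ *
          ‖_‖
        ≤ x ^ ((a ^ 2 - a + 1/6) / 2) * (1 + x ^ a) * (siegelA x (1 + a) * siegelA x (1 - a)) := by
          have h1 : (0:ℝ) ≤ x ^ ((a ^ 2 - a + 1/6) / 2) := (Real.rpow_pos_of_pos hx0 _).le
          exact mul_le_mul (mul_le_mul_of_nonneg_left hqz1 h1) hprod
            (norm_nonneg _) (by positivity)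
      _ = x ^ ((1 : ℝ)/12) * siegelF x a := by
          have hsplit : x ^ ((a ^ 2 - a + 1/6) / 2) = x ^ ((1 : ℝ)/12) * x ^ ((a ^ 2 - a) / 2) := by
            rw [← Real.rpow_add hx0]; congr 1; ring
          have hAsucc : (1 + x ^ a) * siegelA x (a + 1) = siegelA x a :=
            (siegelA_succ hx0 hx1 a).symm
          rw [siegelF, hsplit, show (1 : ℝ) + a = a + 1 from by ring]
          linear_combination (x ^ ((1:ℝ)/12) * x ^ ((a ^ 2 - a) / 2) * siegelA x (1 - a)) * hAsucc
  -- reduce to the fractional part and conclude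
  have hfract : siegelF x a = siegelF x (Int.fract a) := by
    have := siegelF_int hx0 hx1 (Int.fract a) ⌊a⌋
    rw [Int.fract_add_floor] at this
    exact this
  have hFlt : siegelF x (Int.fract a) < 2.29 * x ^ (-(1/8 : ℝ)) :=
    siegelF_lt hx0 hx001 (Int.fract_nonneg a) (Int.fract_lt_one a)
  have hxp : (0:ℝ) < x ^ ((1 : ℝ)/12) := Real.rpow_pos_of_pos hx0 _
  calc ‖siegelFunction v τ‖ ≤ x ^ ((1 : ℝ)/12) * siegelF x a := hmainle
    _ = x ^ ((1 : ℝ)/12) * siegelF x (Int.fract a) := by rw [hfract]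
    _ < x ^ ((1 : ℝ)/12) * (2.29 * x ^ (-(1/8 : ℝ))) := mul_lt_mul_of_pos_left hFlt hxp
    _ = 2.29 * (x ^ ((1 : ℝ)/12) * x ^ (-(1/8 : ℝ))) := by ring
    _ = 2.29 * x ^ (-(1/24) : ℝ) := by
        rw [← Real.rpow_add hx0]; norm_num
    _ = 2.29 * ‖Complex.exp (2 * (Real.pi : ℂ) * Complex.I * τ)‖ ^ (-(1/24) : ℝ) := by
        rw [habsq]
end

section
/- Let N ≥ 2 be an integer, let v = (v₁, v₂) ∈ (1/N)ℤ² ∖ ℤ², and let τ ∈ ℍ satisfy |q_τ| = |e^{2πiτ}| ≤ e^{−π√3}. Then |g_v(τ)| > 0.76 · |q_τ|^{1/12} / N. -/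
set_option maxHeartbeats 1000000


open Complex

namespace SG
noncomputable section

def q (τ : ℂ) : ℂ := Complex.exp (2 * (Real.pi : ℂ) * Complex.I * τ)
def w (v : ℚ × ℚ) (τ : ℂ) : ℂ :=
  Complex.exp (2 * (Real.pi : ℂ) * Complex.I * ((v.1 : ℂ) * τ + (v.2 : ℂ)))
def L (τ : ℂ) : ℝ := -(2 * Real.pi * τ.im)

lemma lin_re (a b : ℝ) (τ : ℂ) :
    (2 * (Real.pi : ℂ) * Complex.I * ((a : ℂ) * τ + (b : ℂ))).re = a * L τ := by
  simp [L, Complex.mul_re, Complex.mul_im, Complex.add_re, Complex.add_im]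
  ring

lemma abs_lin (a b : ℝ) (τ : ℂ) :
    ‖Complex.exp (2 * (Real.pi : ℂ) * Complex.I * ((a : ℂ) * τ + (b : ℂ)))‖ =
      Real.exp (a * L τ) := by
  rw [Complex.norm_exp, lin_re]

lemma abs_q (τ : ℂ) : ‖q τ‖ = Real.exp (L τ) := by
  have := abs_lin 1 0 τ
  simpa [q] using this

lemma abs_w (v : ℚ × ℚ) (τ : ℂ) : ‖w v τ‖ = Real.exp ((v.1 : ℝ) * L τ) := by
  have := abs_lin (v.1 : ℝ) (v.2 : ℝ) τ
  simpa [w] using this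

lemma q_ne_zero (τ : ℂ) : q τ ≠ 0 := Complex.exp_ne_zero _
lemma w_ne_zero (v : ℚ × ℚ) (τ : ℂ) : w v τ ≠ 0 := Complex.exp_ne_zero _

lemma L_neg {τ : ℂ} (hτ : 0 < τ.im) : L τ < 0 := by
  have hπ := Real.pi_pos
  simp only [L]
  nlinarith

lemma abs_q_lt_one {τ : ℂ} (hτ : 0 < τ.im) : ‖q τ‖ < 1 := by
  rw [abs_q]
  exact Real.exp_lt_one_iff.mpr (L_neg hτ)

/-- nonvanishing of factors -/
lemma one_sub_exp_ne_zero {τ : ℂ} (hτ : 0 < τ.im) (a b : ℝ)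
    (h : a ≠ 0 ∨ ∀ k : ℤ, b ≠ k) :
    1 - Complex.exp (2 * (Real.pi : ℂ) * Complex.I * ((a : ℂ) * τ + (b : ℂ))) ≠ 0 := by
  intro hc
  have h1 : Complex.exp (2 * (Real.pi : ℂ) * Complex.I * ((a : ℂ) * τ + (b : ℂ))) = 1 := by
    have := sub_eq_zero.mp hc
    exact this.symm
  rw [Complex.exp_eq_one_iff] at h1
  obtain ⟨n, hn⟩ := h1
  have h2 : ((a : ℂ) * τ + (b : ℂ)) = (n : ℂ) := by
    have hne : (2 * (Real.pi : ℂ) * Complex.I) ≠ 0 :=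
      mul_ne_zero (mul_ne_zero two_ne_zero (Complex.ofReal_ne_zero.mpr Real.pi_ne_zero))
        Complex.I_ne_zero
    exact mul_left_cancel₀ hne (hn.trans (mul_comm _ _))
  have him : a * τ.im = 0 := by
    have := congrArg Complex.im h2
    simpa [Complex.add_im, Complex.mul_im] using this
  have ha : a = 0 := by
    rcases mul_eq_zero.mp him with h | h
    · exact h
    · exact absurd h (ne_of_gt hτ)
  rcases h with h | h
  · exact h ha
  · have hre : a * τ.re + b = (n : ℝ) := by
      have := congrArg Complex.re h2
      simpa [Complex.add_re, Complex.mul_re] using this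
    rw [ha] at hre
    simp at hre
    exact h n hre


/-- summability of complex logs of  1 - q^{n+1} c -/
lemma summable_clog (q c : ℂ) (hq : ‖q‖ < 1) :
    Summable (fun n : ℕ => Complex.log (1 - q ^ (n + 1) * c)) := by
  have h0 : Filter.Tendsto (fun n : ℕ => ‖q‖ ^ (n + 1) * ‖c‖)
      Filter.atTop (nhds 0) := by
    have := tendsto_pow_atTop_nhds_zero_of_lt_one (norm_nonneg q) hq
    have h1 := ((this.comp (Filter.tendsto_add_atTop_nat 1)).mul_const (‖c‖))
    simpa using h1
  have hev : ∀ᶠ n : ℕ in Filter.atTop,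
      ‖Complex.log (1 - q ^ (n + 1) * c)‖ ≤
        (3 / 2) * (‖c‖ * ‖q‖ * ‖q‖ ^ n) := by
    filter_upwards [h0.eventually_le_const (by norm_num : (0:ℝ) < 1/2)] with n hn
    have habs : ‖q ^ (n + 1) * c‖ = ‖q‖ ^ (n + 1) * ‖c‖ := by
      simp [map_mul, map_pow]
    have hz : ‖(-(q ^ (n + 1) * c) : ℂ)‖ ≤ 1 / 2 := by
      rw [norm_neg, habs]
      exact hn
    have := Complex.norm_log_one_add_half_le_self hz
    have heq : (1 : ℂ) + -(q ^ (n + 1) * c) = 1 - q ^ (n + 1) * c := by ring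
    rw [heq] at this
    refine this.trans ?_
    rw [norm_neg, habs]
    have : ‖q‖ ^ (n + 1) * ‖c‖
        = ‖c‖ * ‖q‖ * ‖q‖ ^ n := by ring
    rw [this]
  refine Summable.of_norm_bounded_eventually_nat ?_ hev
  have hg := (summable_geometric_of_lt_one (norm_nonneg q) hq).mul_left
    (3 / 2 * (‖c‖ * ‖q‖))
  refine hg.congr fun n => by ring

lemma summable_rlog (q c : ℂ) (hq : ‖q‖ < 1) :
    Summable (fun n : ℕ => Real.log (‖1 - q ^ (n + 1) * c‖)) := by
  have h := (Complex.hasSum_re (summable_clog q c hq).hasSum).summable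
  refine h.congr fun n => ?_
  exact Complex.log_re _

lemma hasProd_clog (q c : ℂ) (hq : ‖q‖ < 1)
    (h0 : ∀ n : ℕ, 1 - q ^ (n + 1) * c ≠ 0) :
    HasProd (fun n : ℕ => 1 - q ^ (n + 1) * c)
      (Complex.exp (∑' n : ℕ, Complex.log (1 - q ^ (n + 1) * c))) := by
  have h := ((summable_clog q c hq).hasSum).cexp
  have he : (Complex.exp ∘ fun n : ℕ => Complex.log (1 - q ^ (n + 1) * c))
      = fun n : ℕ => 1 - q ^ (n + 1) * c := by
    funext n; exact Complex.exp_log (h0 n)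
  rwa [he] at h

lemma multipliable_fac (q c : ℂ) (hq : ‖q‖ < 1)
    (h0 : ∀ n : ℕ, 1 - q ^ (n + 1) * c ≠ 0) :
    Multipliable (fun n : ℕ => 1 - q ^ (n + 1) * c) :=
  ⟨_, hasProd_clog q c hq h0⟩

lemma abs_tprod (q c : ℂ) (hq : ‖q‖ < 1)
    (h0 : ∀ n : ℕ, 1 - q ^ (n + 1) * c ≠ 0) :
    ‖∏' n : ℕ, (1 - q ^ (n + 1) * c)‖ =
      Real.exp (∑' n : ℕ, Real.log (‖1 - q ^ (n + 1) * c‖)) := by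
  rw [(hasProd_clog q c hq h0).tprod_eq, Complex.norm_exp]
  congr 1
  rw [Complex.re_tsum (summable_clog q c hq)]
  exact tsum_congr fun n => Complex.log_re _


def A (v : ℚ × ℚ) (τ : ℂ) (n : ℕ) : ℝ :=
  Real.log (‖1 - q τ ^ (n + 1) * w v τ‖)
def B (v : ℚ × ℚ) (τ : ℂ) (n : ℕ) : ℝ :=
  Real.log (‖1 - q τ ^ (n + 1) * (w v τ)⁻¹‖)
def Psi (v : ℚ × ℚ) (τ : ℂ) : ℝ :=
  ((v.1 : ℝ) ^ 2 - (v.1 : ℝ) + 1 / 6) / 2 * L τ +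
    Real.log (‖1 - w v τ‖) + ∑' n, A v τ n + ∑' n, B v τ n

lemma qpow_mul_w (v : ℚ × ℚ) (τ : ℂ) (m : ℕ) :
    q τ ^ m * w v τ =
      Complex.exp (2 * (Real.pi : ℂ) * Complex.I *
        ((((v.1 : ℝ) + m : ℝ) : ℂ) * τ + ((v.2 : ℝ) : ℂ))) := by
  rw [q, w, ← Complex.exp_nat_mul, ← Complex.exp_add]
  congr 1
  push_cast
  ring

lemma qpow_mul_winv (v : ℚ × ℚ) (τ : ℂ) (m : ℕ) :
    q τ ^ m * (w v τ)⁻¹ =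
      Complex.exp (2 * (Real.pi : ℂ) * Complex.I *
        (((m - (v.1 : ℝ) : ℝ) : ℂ) * τ + ((-(v.2 : ℝ) : ℝ) : ℂ))) := by
  rw [q, w, ← Complex.exp_neg, ← Complex.exp_nat_mul, ← Complex.exp_add]
  congr 1
  push_cast
  ring

lemma not_int_cast {y : ℚ} (h : ¬∃ k : ℤ, y = (k : ℚ)) : ∀ k : ℤ, (y : ℝ) ≠ (k : ℝ) := by
  intro k hk
  exact h ⟨k, by exact_mod_cast hk⟩

lemma ne_fac1 {v : ℚ × ℚ} {τ : ℂ} (hτ : 0 < τ.im)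
    (hv : ¬∃ m n : ℤ, v.1 = (m : ℚ) ∧ v.2 = (n : ℚ)) (n : ℕ) :
    1 - q τ ^ (n + 1) * w v τ ≠ 0 := by
  rw [qpow_mul_w]
  apply one_sub_exp_ne_zero hτ
  by_cases hx : ((v.1 : ℝ) + (n + 1 : ℕ)) = 0
  · right
    refine not_int_cast fun hy => ?_
    obtain ⟨k, hk⟩ := hy
    have hx' : v.1 = ((-(n + 1 : ℤ) : ℤ) : ℚ) := by
      have : (v.1 : ℝ) = ((-(n + 1 : ℤ) : ℤ) : ℝ) := by push_cast; push_cast at hx; linarith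
      exact_mod_cast this
    exact hv ⟨_, k, hx', hk⟩
  · left; exact hx

lemma ne_fac2 {v : ℚ × ℚ} {τ : ℂ} (hτ : 0 < τ.im)
    (hv : ¬∃ m n : ℤ, v.1 = (m : ℚ) ∧ v.2 = (n : ℚ)) (n : ℕ) :
    1 - q τ ^ (n + 1) * (w v τ)⁻¹ ≠ 0 := by
  rw [qpow_mul_winv]
  apply one_sub_exp_ne_zero hτ
  by_cases hx : (((n + 1 : ℕ) : ℝ) - (v.1 : ℝ)) = 0
  · right
    intro k hk
    have hy : ¬∃ k : ℤ, v.2 = (k : ℚ) := by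
      intro ⟨j, hj⟩
      have hx' : v.1 = (((n + 1 : ℤ) : ℤ) : ℚ) := by
        have : (v.1 : ℝ) = (((n + 1 : ℤ) : ℤ) : ℝ) := by push_cast; push_cast at hx; linarith
        exact_mod_cast this
      exact hv ⟨_, j, hx', hj⟩
    have : (v.2 : ℝ) = ((-k : ℤ) : ℝ) := by push_cast; linarith [hk]
    exact not_int_cast hy (-k) this
  · left; exact hx

lemma ne_front {v : ℚ × ℚ} {τ : ℂ} (hτ : 0 < τ.im)
    (hv : ¬∃ m n : ℤ, v.1 = (m : ℚ) ∧ v.2 = (n : ℚ)) :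
    1 - w v τ ≠ 0 := by
  have h := qpow_mul_w v τ 0
  rw [pow_zero, one_mul] at h
  rw [h]
  apply one_sub_exp_ne_zero hτ
  by_cases hx : ((v.1 : ℝ) + (0 : ℕ)) = 0
  · right
    refine not_int_cast fun hy => ?_
    obtain ⟨k, hk⟩ := hy
    have hx' : v.1 = ((0 : ℤ) : ℚ) := by
      have : (v.1 : ℝ) = ((0 : ℤ) : ℝ) := by push_cast; push_cast at hx; linarith
      exact_mod_cast this
    exact hv ⟨_, k, hx', hk⟩
  · left; exact hx

lemma siegel_eq (v : ℚ × ℚ) (τ : ℂ) :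
    siegelFunction v τ =
      (-Complex.exp ((Real.pi : ℂ) * Complex.I * (v.2 : ℂ) * ((v.1 : ℂ) - 1))) *
        Complex.exp (2 * (Real.pi : ℂ) * Complex.I *
          ((1 / 2 : ℂ) * ((v.1 : ℂ) ^ 2 - (v.1 : ℂ) + 1 / 6)) * τ) *
        (1 - w v τ) *
        ∏' n : ℕ, ((1 - q τ ^ (n + 1) * w v τ) * (1 - q τ ^ (n + 1) * (w v τ)⁻¹)) := rfl

lemma abs_siegel {v : ℚ × ℚ} {τ : ℂ} (hτ : 0 < τ.im)
    (hv : ¬∃ m n : ℤ, v.1 = (m : ℚ) ∧ v.2 = (n : ℚ)) :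
    ‖siegelFunction v τ‖ = Real.exp (Psi v τ) := by
  have hq1 : ‖q τ‖ < 1 := abs_q_lt_one hτ
  rw [siegel_eq, norm_mul, norm_mul, norm_mul]
  -- first factor
  have h1 : ‖-Complex.exp ((Real.pi : ℂ) * Complex.I * (v.2 : ℂ) * ((v.1 : ℂ) - 1))‖
      = 1 := by
    rw [norm_neg, Complex.norm_exp]
    have : ((Real.pi : ℂ) * Complex.I * (v.2 : ℂ) * ((v.1 : ℂ) - 1)).re = 0 := by
      simp [Complex.mul_re, Complex.mul_im, Complex.sub_re, Complex.sub_im]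
    rw [this, Real.exp_zero]
  -- second factor
  have h2 : ‖Complex.exp (2 * (Real.pi : ℂ) * Complex.I *
        ((1 / 2 : ℂ) * ((v.1 : ℂ) ^ 2 - (v.1 : ℂ) + 1 / 6)) * τ)‖
      = Real.exp (((v.1 : ℝ) ^ 2 - (v.1 : ℝ) + 1 / 6) / 2 * L τ) := by
    have harg : 2 * (Real.pi : ℂ) * Complex.I *
          ((1 / 2 : ℂ) * ((v.1 : ℂ) ^ 2 - (v.1 : ℂ) + 1 / 6)) * τ
        = 2 * (Real.pi : ℂ) * Complex.I *
          (((((v.1 : ℝ) ^ 2 - (v.1 : ℝ) + 1 / 6) / 2 : ℝ) : ℂ) * τ + ((0 : ℝ) : ℂ)) := by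
      push_cast
      ring
    rw [harg, abs_lin]
  -- third factor
  have h3 : ‖1 - w v τ‖ = Real.exp (Real.log (‖1 - w v τ‖)) :=
    (Real.exp_log (norm_pos_iff.mpr (ne_front hτ hv))).symm
  -- fourth factor
  have hm1 := multipliable_fac (q τ) (w v τ) hq1 (ne_fac1 hτ hv)
  have hm2 := multipliable_fac (q τ) ((w v τ)⁻¹) hq1 (ne_fac2 hτ hv)
  have h4 : ‖∏' n : ℕ,
        ((1 - q τ ^ (n + 1) * w v τ) * (1 - q τ ^ (n + 1) * (w v τ)⁻¹))‖
      = Real.exp ((∑' n, A v τ n) + ∑' n, B v τ n) := by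
    rw [Multipliable.tprod_mul hm1 hm2, norm_mul,
      abs_tprod (q τ) (w v τ) hq1 (ne_fac1 hτ hv),
      abs_tprod (q τ) ((w v τ)⁻¹) hq1 (ne_fac2 hτ hv), ← Real.exp_add]
    rfl
  rw [h1, h2, h3, h4, Psi, one_mul, ← Real.exp_add, ← Real.exp_add]
  ring_nf

lemma log_abs_one_sub_inv (v : ℚ × ℚ) (τ : ℂ) :
    Real.log (‖1 - (w v τ)⁻¹‖) =
      Real.log (‖1 - w v τ‖) - (v.1 : ℝ) * L τ := by
  have hw0 : w v τ ≠ 0 := w_ne_zero v τ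
  have hkey : (1 - (w v τ)⁻¹) = (1 - w v τ) * (-(w v τ)⁻¹) := by
    field_simp
    ring
  have habs : ‖1 - (w v τ)⁻¹‖
      = ‖1 - w v τ‖ * (‖w v τ‖)⁻¹ := by
    rw [hkey, norm_mul, norm_neg, norm_inv]
  have hlogw : Real.log (‖w v τ‖) = (v.1 : ℝ) * L τ := by
    rw [abs_w, Real.log_exp]
  by_cases h : 1 - w v τ = 0
  · have hw1 : w v τ = 1 := by linear_combination -h
    have hxL : (v.1 : ℝ) * L τ = 0 := by
      rw [← hlogw, hw1]
      simp
    rw [hw1] at habs ⊢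
    simp [hxL]
  · rw [habs, Real.log_mul (norm_ne_zero_iff.mpr h) (by simp [hw0]), Real.log_inv, hlogw]
    ring

lemma Psi_step (v : ℚ × ℚ) {τ : ℂ} (hτ : 0 < τ.im) :
    Psi (v.1 + 1, v.2) τ = Psi v τ := by
  have hq1 := abs_q_lt_one hτ
  have hq0 := q_ne_zero τ
  have hw' : w (v.1 + 1, v.2) τ = q τ * w v τ := by
    rw [w, w, q, ← Complex.exp_add]; congr 1; push_cast; ring
  have hA : Summable (A v τ) := by unfold A; exact summable_rlog _ _ hq1
  have hB : Summable (B v τ) := by unfold B; exact summable_rlog _ _ hq1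
  set g : ℕ → ℝ := fun n => Real.log (‖1 - q τ ^ n * (w v τ)⁻¹‖) with hg_def
  have hg : Summable g := by
    rw [← summable_nat_add_iff 1]
    exact hB.congr fun n => rfl
  have hAA : ∀ n, A (v.1 + 1, v.2) τ n = A v τ (n + 1) := by
    intro n
    have hx : q τ ^ (n + 1) * w (v.1 + 1, v.2) τ = q τ ^ (n + 1 + 1) * w v τ := by
      rw [hw']; ring
    unfold A
    rw [hx]
  have hBB : ∀ n, B (v.1 + 1, v.2) τ n = g n := by
    intro n
    have hx : q τ ^ (n + 1) * (w (v.1 + 1, v.2) τ)⁻¹ = q τ ^ n * (w v τ)⁻¹ := by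
      rw [hw', mul_inv, pow_succ]
      rw [show q τ ^ n * q τ * ((q τ)⁻¹ * (w v τ)⁻¹)
          = q τ ^ n * (q τ * (q τ)⁻¹) * (w v τ)⁻¹ by ring,
        mul_inv_cancel₀ hq0, mul_one]
    unfold B
    rw [hx]
  have hsumB' : ∑' n, B (v.1 + 1, v.2) τ n = g 0 + ∑' n, B v τ n := by
    rw [tsum_congr hBB, Summable.tsum_eq_zero_add hg]
    exact congrArg (g 0 + ·) (tsum_congr fun n => rfl)
  have hsumA : ∑' n, A v τ n = A v τ 0 + ∑' n, A v τ (n + 1) := Summable.tsum_eq_zero_add hA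
  have hsumA' : ∑' n, A (v.1 + 1, v.2) τ n = ∑' n, A v τ (n + 1) := tsum_congr hAA
  have hfront' : Real.log (‖1 - w (v.1 + 1, v.2) τ‖) = A v τ 0 := by
    unfold A
    rw [hw', pow_one]
  have hg0 : g 0 = Real.log (‖1 - w v τ‖) - (v.1 : ℝ) * L τ := by
    rw [hg_def]
    simpa using log_abs_one_sub_inv v τ
  have hpre : (((v.1 + 1 : ℚ) : ℝ) ^ 2 - ((v.1 + 1 : ℚ) : ℝ) + 1 / 6) / 2 * L τ
      = ((v.1 : ℝ) ^ 2 - (v.1 : ℝ) + 1 / 6) / 2 * L τ + (v.1 : ℝ) * L τ := by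
    push_cast
    ring
  unfold Psi
  simp only at hsumB' hsumA' hfront' ⊢
  rw [hsumB', hsumA', hfront', hg0, hpre]
  linarith [hsumA]

lemma Psi_neg (v : ℚ × ℚ) {τ : ℂ} (hτ : 0 < τ.im) :
    Psi (-v.1, -v.2) τ = Psi v τ := by
  have hq1 := abs_q_lt_one hτ
  have hw' : w (-v.1, -v.2) τ = (w v τ)⁻¹ := by
    rw [w, w, ← Complex.exp_neg]; congr 1; push_cast; ring
  have hAA : ∀ n, A (-v.1, -v.2) τ n = B v τ n := by
    intro n; unfold A B; rw [hw']
  have hBB : ∀ n, B (-v.1, -v.2) τ n = A v τ n := by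
    intro n; unfold A B; rw [hw', inv_inv]
  have hfront : Real.log (‖1 - w (-v.1, -v.2) τ‖)
      = Real.log (‖1 - w v τ‖) - (v.1 : ℝ) * L τ := by
    rw [hw']; exact log_abs_one_sub_inv v τ
  have hpre : ((((-v.1 : ℚ)) : ℝ) ^ 2 - (((-v.1 : ℚ)) : ℝ) + 1 / 6) / 2 * L τ
      = ((v.1 : ℝ) ^ 2 - (v.1 : ℝ) + 1 / 6) / 2 * L τ + (v.1 : ℝ) * L τ := by
    push_cast
    ring
  unfold Psi
  simp only at hfront ⊢
  rw [tsum_congr hAA, tsum_congr hBB, hfront, hpre]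
  ring

lemma Psi_int_shift (v : ℚ × ℚ) {τ : ℂ} (hτ : 0 < τ.im) (k : ℤ) :
    Psi (v.1 + k, v.2) τ = Psi v τ := by
  induction k using Int.induction_on with
  | zero => simp
  | succ n ih =>
      have := Psi_step (v.1 + (n : ℤ), v.2) hτ
      simp only at this
      rw [← ih, ← this]
      congr 2
      push_cast
      ring
  | pred n ih =>
      have := Psi_step (v.1 + (-(n : ℤ) - 1 : ℤ), v.2) hτ
      simp only at this
      rw [← ih, ← this]
      · congr 2
        push_cast
        ring
      

lemma loglb {z : ℂ} (hz : ‖z‖ ≤ 1 / 2) :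
    -2 * ‖z‖ ≤ Real.log (‖1 - z‖) := by
  set t := ‖z‖ with ht
  have ht0 : 0 ≤ t := norm_nonneg z
  have h1 : 1 - t ≤ ‖1 - z‖ := by
    have := norm_sub_norm_le (1 : ℂ) z
    simpa using this
  have h2 : Real.exp (-2 * t) ≤ 1 - t := by
    have h3 := Real.add_one_le_exp (2 * t)
    have h5 : (1 : ℝ) ≤ (1 - t) * Real.exp (2 * t) := by nlinarith [Real.exp_pos (2 * t)]
    have h6 : Real.exp (-2 * t) * Real.exp (2 * t) = 1 := by
      rw [← Real.exp_add]; norm_num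
    nlinarith [Real.exp_pos (2 * t), Real.exp_pos (-2 * t)]
  calc -2 * t = Real.log (Real.exp (-2 * t)) := (Real.log_exp _).symm
  _ ≤ Real.log (‖1 - z‖) := Real.log_le_log (Real.exp_pos _) (h2.trans h1)

lemma pi_sqrt3 : (5 : ℝ) ≤ Real.pi * Real.sqrt 3 := by
  have h1 : (3.141592 : ℝ) < Real.pi := Real.pi_gt_d6
  have h2 : (1.7 : ℝ) ≤ Real.sqrt 3 :=
    (Real.le_sqrt (by norm_num) (by norm_num)).mpr (by norm_num)
  nlinarith

lemma kappa_bound : Real.exp (-(5 / 2) : ℝ) ≤ 0.0823 := by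
  have h1 : (2.7182818 : ℝ) ≤ Real.exp 1 := le_of_lt (by
    have := Real.exp_one_gt_d9; linarith)
  have h2 : (2.7182818 : ℝ) ^ (5 : ℕ) ≤ Real.exp 1 ^ (5 : ℕ) :=
    pow_le_pow_left₀ (by norm_num) h1 5
  have h3 : Real.exp 1 ^ (5 : ℕ) = Real.exp 5 := by
    rw [← Real.exp_nat_mul]; norm_num
  have h5 : (148.3 : ℝ) ≤ Real.exp 5 := by
    have h4 : (148.3 : ℝ) ≤ (2.7182818 : ℝ) ^ (5 : ℕ) := by norm_num
    linarith
  have hh : (12.16 : ℝ) ≤ Real.exp (5 / 2) := by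
    rw [Real.exp_half]
    have h0 : (12.16 : ℝ) ≤ Real.sqrt 148.3 := by
      rw [Real.le_sqrt (by norm_num) (by norm_num)]
      norm_num
    exact h0.trans (Real.sqrt_le_sqrt h5)
  rw [Real.exp_neg]
  have h12 : (0 : ℝ) < Real.exp (5 / 2) := Real.exp_pos _
  have h13 : (Real.exp (5 / 2))⁻¹ * Real.exp (5 / 2) = 1 := inv_mul_cancel₀ h12.ne'
  nlinarith [inv_nonneg.mpr h12.le]

lemma front_circle (N : ℕ) (hN : 2 ≤ N) (v : ℚ × ℚ) (τ : ℂ) (hx : v.1 = 0)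
    (hy : ∃ b : ℤ, v.2 = (b : ℚ) / N) (hvy : ¬∃ k : ℤ, v.2 = (k : ℚ)) :
    2 / (N : ℝ) ≤ ‖1 - w v τ‖ := by
  obtain ⟨b, hb⟩ := hy
  have hN0 : (0 : ℝ) < N := by positivity
  have hNQ : ((N : ℚ)) ≠ 0 := by positivity
  have hNZ : (0 : ℤ) < (N : ℤ) := by positivity
  set r := b % (N : ℤ) with hr_def
  have hr0 : 0 ≤ r := Int.emod_nonneg b hNZ.ne'
  have hrN : r < N := Int.emod_lt_of_pos b hNZ
  have hr1 : 1 ≤ r := by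
    rcases eq_or_lt_of_le hr0 with h | h
    · exfalso
      have hdvd : (N : ℤ) ∣ b := Int.dvd_of_emod_eq_zero h.symm
      obtain ⟨k, hk⟩ := hdvd
      exact hvy ⟨k, by rw [hb, hk]; push_cast; field_simp⟩
    · exact h
  set t : ℚ := (r : ℚ) / N with ht_def
  have hbe : b = (N : ℤ) * (b / (N : ℤ)) + r := (Int.mul_ediv_add_emod b (N : ℤ)).symm
  have hsplit : v.2 = t + ((b / (N : ℤ) : ℤ) : ℚ) := by
    have hbq : ((b : ℚ)) = (N : ℚ) * ((b / (N : ℤ) : ℤ) : ℚ) + (r : ℚ) := by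
      exact_mod_cast congrArg (fun z : ℤ => (z : ℚ)) hbe
    rw [hb, ht_def, hbq]
    field_simp
    ring
  have hw_eq : w v τ = Complex.exp (2 * (Real.pi : ℂ) * Complex.I * ((t : ℚ) : ℂ)) := by
    rw [w, hx, hsplit]
    have hkey : Complex.exp (2 * (Real.pi : ℂ) * Complex.I * ((t : ℚ) : ℂ)
          + ((b / (N : ℤ) : ℤ) : ℂ) * (2 * (Real.pi : ℂ) * Complex.I))
        = Complex.exp (2 * (Real.pi : ℂ) * Complex.I * ((t : ℚ) : ℂ)) := by
      rw [Complex.exp_add, Complex.exp_int_mul_two_pi_mul_I, mul_one]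
    rw [← hkey]
    congr 1
    push_cast
    ring
  set θ : ℝ := 2 * Real.pi * (t : ℝ) with hθ_def
  have hw_arg : 2 * (Real.pi : ℂ) * Complex.I * ((t : ℚ) : ℂ) = (θ : ℂ) * Complex.I := by
    rw [hθ_def]; push_cast; ring
  have hw_re : (w v τ).re = Real.cos θ := by
    rw [hw_eq, hw_arg, Complex.exp_ofReal_mul_I_re]
  have hw_im : (w v τ).im = Real.sin θ := by
    rw [hw_eq, hw_arg, Complex.exp_ofReal_mul_I_im]
  have hπ := Real.pi_pos
  have htr : ((t : ℚ) : ℝ) = (r : ℝ) / (N : ℝ) := by rw [ht_def]; push_cast; ring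
  have hr1' : (1 : ℝ) ≤ (r : ℝ) := by exact_mod_cast hr1
  have hrR : (r : ℝ) ≤ (N : ℝ) - 1 := by
    have : (r : ℝ) + 1 ≤ (N : ℝ) := by exact_mod_cast hrN
    linarith
  have htlo : 1 / (N : ℝ) ≤ ((t : ℚ) : ℝ) := by rw [htr]; gcongr
  have hthi : ((t : ℚ) : ℝ) ≤ 1 - 1 / (N : ℝ) := by
    rw [htr, div_le_iff₀ hN0]
    have hNN : (1 / (N : ℝ)) * (N : ℝ) = 1 := by field_simp
    nlinarith
  have hinvN : (0 : ℝ) < 1 / (N : ℝ) := by positivity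
  have ht0 : 0 < ((t : ℚ) : ℝ) := lt_of_lt_of_le hinvN htlo
  have ht1 : ((t : ℚ) : ℝ) ≤ 1 := by linarith
  have hNt : (1 : ℝ) ≤ ((t : ℚ) : ℝ) * (N : ℝ) := (div_le_iff₀ hN0).mp htlo
  have habs_im : |(1 - w v τ).im| ≤ ‖1 - w v τ‖ := Complex.abs_im_le_norm _
  have him : (1 - w v τ).im = -Real.sin θ := by
    simp [Complex.sub_im, hw_im]
  rcases le_or_gt ((t : ℚ) : ℝ) (1 / 4) with h4 | h4
  · have hθ0 : 0 ≤ θ := by rw [hθ_def]; positivity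
    have hθh : θ ≤ Real.pi / 2 := by rw [hθ_def]; nlinarith
    have hsin := Real.mul_le_sin hθ0 hθh
    have heq : 2 / Real.pi * θ = 4 * ((t : ℚ) : ℝ) := by
      rw [hθ_def]; field_simp; ring
    rw [heq] at hsin
    have h1 : 2 / (N : ℝ) ≤ 4 * ((t : ℚ) : ℝ) := by
      rw [div_le_iff₀ hN0]; nlinarith
    refine le_trans ?_ habs_im
    rw [him, abs_neg, _root_.abs_of_nonneg (by nlinarith : 0 ≤ Real.sin θ)]
    linarith
  · rcases le_or_gt (3 / 4 : ℝ) ((t : ℚ) : ℝ) with h34 | h34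
    · set φ : ℝ := 2 * Real.pi * (1 - ((t : ℚ) : ℝ)) with hφ_def
      have hφ0 : 0 ≤ φ := by rw [hφ_def]; nlinarith
      have hφh : φ ≤ Real.pi / 2 := by rw [hφ_def]; nlinarith
      have hsinφ : Real.sin φ = -Real.sin θ := by
        rw [show φ = 2 * Real.pi - θ by rw [hφ_def, hθ_def]; ring, Real.sin_sub]
        simp
      have hsin := Real.mul_le_sin hφ0 hφh
      have heq : 2 / Real.pi * φ = 4 * (1 - ((t : ℚ) : ℝ)) := by
        rw [hφ_def]; field_simp; ring
      rw [heq] at hsin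
      have h1mt : 1 / (N : ℝ) ≤ 1 - ((t : ℚ) : ℝ) := by linarith
      have hNt2 : (1 : ℝ) ≤ (1 - ((t : ℚ) : ℝ)) * (N : ℝ) := (div_le_iff₀ hN0).mp h1mt
      have h1 : 2 / (N : ℝ) ≤ 4 * (1 - ((t : ℚ) : ℝ)) := by
        rw [div_le_iff₀ hN0]; nlinarith
      refine le_trans ?_ habs_im
      rw [him, abs_neg, _root_.abs_of_nonpos (by nlinarith : Real.sin θ ≤ 0)]
      linarith
    · have hcos : Real.cos θ ≤ 0 := by
        apply Real.cos_nonpos_of_pi_div_two_le_of_le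
        · rw [hθ_def]; nlinarith
        · rw [hθ_def]; nlinarith
      have hre : (1 - w v τ).re = 1 - Real.cos θ := by
        simp [Complex.sub_re, hw_re]
      have h1 : 2 / (N : ℝ) ≤ 1 := by
        rw [div_le_iff₀ hN0]
        have : (2 : ℝ) ≤ N := by exact_mod_cast hN
        linarith
      calc 2 / (N : ℝ) ≤ 1 - Real.cos θ := by linarith
      _ = (1 - w v τ).re := hre.symm
      _ ≤ ‖1 - w v τ‖ := Complex.re_le_norm _

lemma Psi_est (N : ℕ) (hN : 2 ≤ N) (v : ℚ × ℚ) {τ : ℂ} (hτ : 0 < τ.im)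
    (hq : Real.exp (L τ) ≤ Real.exp (-Real.pi * Real.sqrt 3))
    (hv : ¬∃ m n : ℤ, v.1 = (m : ℚ) ∧ v.2 = (n : ℚ))
    (hx0 : 0 ≤ v.1) (hx2 : v.1 ≤ 1 / 2)
    (hcase : (1 : ℚ) / N ≤ v.1 ∨ v.1 = 0) (hy : ∃ b : ℤ, v.2 = (b : ℚ) / N) :
    0.76 * Real.exp (L τ / 12) / N < Real.exp (Psi v τ) := by
  have hN0 : (0 : ℝ) < N := by positivity
  have hq1 := abs_q_lt_one hτ
  have hl : L τ < 0 := L_neg hτ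
  set l := L τ with hl_def
  have hlpi : l ≤ -(Real.pi * Real.sqrt 3) := by
    have h := Real.exp_le_exp.mp hq
    linarith [h, (by ring : -Real.pi * Real.sqrt 3 = -(Real.pi * Real.sqrt 3))]
  have hl5 : l ≤ -5 := by linarith [pi_sqrt3]
  set σ := Real.exp (l / 2) with hσ_def
  have hσ0 : 0 < σ := Real.exp_pos _
  have hσκ : σ ≤ 0.0823 := le_trans (Real.exp_le_exp.mpr (by linarith)) kappa_bound
  have hσ2 : σ ^ 2 = Real.exp l := by
    rw [hσ_def, sq, ← Real.exp_add]
    congr 1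
    ring
  have hσ2nn : 0 ≤ σ ^ 2 := sq_nonneg σ
  have hσ2lt : σ ^ 2 < 1 := by nlinarith
  set x : ℝ := ((v.1 : ℚ) : ℝ) with hx_def
  have hx0' : (0 : ℝ) ≤ x := by rw [hx_def]; exact_mod_cast hx0
  have hx2' : x ≤ 1 / 2 := by
    rw [hx_def]
    have := (Rat.cast_le (K := ℝ)).mpr hx2
    simpa using this
  have hgeo_pow : ∀ n : ℕ, (σ ^ 2) ^ n ≤ 1 := fun n => pow_le_one₀ hσ2nn hσ2lt.le
  have hterm_half : ∀ n : ℕ, σ * (σ ^ 2) ^ n ≤ 1 / 2 := by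
    intro n
    nlinarith [hgeo_pow n, pow_nonneg hσ2nn n]
  have hexp_pow : ∀ n : ℕ, Real.exp l ^ (n + 1) = Real.exp (((n : ℕ) + 1 : ℕ) * l) := by
    intro n
    rw [Real.exp_nat_mul]
  have hgeom_eq : ∀ n : ℕ, σ * (σ ^ 2) ^ n = Real.exp (l / 2 + (n : ℕ) * l) := by
    intro n
    rw [hσ2, hσ_def, ← Real.exp_nat_mul, ← Real.exp_add]
  have habs1 : ∀ n : ℕ, ‖q τ ^ (n + 1) * w v τ‖ ≤ σ * (σ ^ 2) ^ n := by
    intro n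
    rw [norm_mul, norm_pow, abs_q, abs_w, ← hl_def, ← hx_def, hexp_pow n, ← Real.exp_add,
      hgeom_eq n]
    apply Real.exp_le_exp.mpr
    push_cast
    nlinarith [mul_nonneg hx0' (neg_nonneg.mpr hl.le)]
  have habs2 : ∀ n : ℕ, ‖q τ ^ (n + 1) * (w v τ)⁻¹‖ ≤ σ * (σ ^ 2) ^ n := by
    intro n
    rw [norm_mul, norm_inv, norm_pow, abs_q, abs_w, ← hl_def, ← hx_def, ← Real.exp_neg,
      hexp_pow n, ← Real.exp_add, hgeom_eq n]
    apply Real.exp_le_exp.mpr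
    push_cast
    nlinarith [mul_nonneg (by linarith : (0:ℝ) ≤ 1 / 2 - x) (neg_nonneg.mpr hl.le)]
  have hA : Summable (A v τ) := by unfold A; exact summable_rlog _ _ hq1
  have hB : Summable (B v τ) := by unfold B; exact summable_rlog _ _ hq1
  have hgeoS : Summable (fun n : ℕ => -2 * σ * (σ ^ 2) ^ n) :=
    (summable_geometric_of_lt_one hσ2nn hσ2lt).mul_left _
  have hA_lb : ∀ n : ℕ, -2 * σ * (σ ^ 2) ^ n ≤ A v τ n := by
    intro n
    unfold A
    have h := loglb ((habs1 n).trans (hterm_half n))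
    refine le_trans ?_ h
    nlinarith [habs1 n]
  have hB_lb : ∀ n : ℕ, -2 * σ * (σ ^ 2) ^ n ≤ B v τ n := by
    intro n
    unfold B
    have h := loglb ((habs2 n).trans (hterm_half n))
    refine le_trans ?_ h
    nlinarith [habs2 n]
  have hgeo_val : ∑' n : ℕ, (-2 * σ * (σ ^ 2) ^ n) = -2 * σ * (1 - σ ^ 2)⁻¹ := by
    rw [tsum_mul_left, tsum_geometric_of_lt_one hσ2nn hσ2lt]
  have hsumA : -2 * σ * (1 - σ ^ 2)⁻¹ ≤ ∑' n, A v τ n := by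
    rw [← hgeo_val]
    exact Summable.tsum_le_tsum hA_lb hgeoS hA
  have hsumB : -2 * σ * (1 - σ ^ 2)⁻¹ ≤ ∑' n, B v τ n := by
    rw [← hgeo_val]
    exact Summable.tsum_le_tsum hB_lb hgeoS hB
  have hnum : (-0.166 : ℝ) ≤ -2 * σ * (1 - σ ^ 2)⁻¹ := by
    have hpos : (0 : ℝ) < 1 - σ ^ 2 := by nlinarith
    have hinv : (1 - σ ^ 2)⁻¹ * (1 - σ ^ 2) = 1 := inv_mul_cancel₀ hpos.ne'
    have hinvnn : (0:ℝ) ≤ (1 - σ ^ 2)⁻¹ := by positivity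
    nlinarith [mul_nonneg hinvnn (by nlinarith : (0:ℝ) ≤ 0.166 * (1 - σ ^ 2) - 2 * σ)]
  -- front bound
  have hfront_ne := ne_front hτ hv
  have hfrontpos : 0 < ‖1 - w v τ‖ := norm_pos_iff.mpr hfront_ne
  have hfront : 1.8354 / (N : ℝ) ≤ ‖1 - w v τ‖ := by
    rcases hcase with hc | hc
    · have hxN : 1 / (N : ℝ) ≤ x := by
        rw [hx_def]
        have : ((1 : ℚ) / N : ℚ) ≤ v.1 := hc
        have h2 : (((1 : ℚ) / N : ℚ) : ℝ) ≤ ((v.1 : ℚ) : ℝ) := by exact_mod_cast this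
        simpa using h2
      have hch : Real.exp (x * l) ≤ 1 - 2 * x + 2 * x * σ := by
        have h := convexOn_exp.2 (Set.mem_univ (0 : ℝ)) (Set.mem_univ (l / 2))
          (by linarith : (0:ℝ) ≤ 1 - 2 * x) (by linarith : (0:ℝ) ≤ 2 * x) (by ring)
        simp only [smul_eq_mul, mul_zero, zero_add, Real.exp_zero, mul_one] at h
        rw [show 2 * x * (l / 2) = x * l by ring] at h
        rw [← hσ_def] at h
        linarith
      have h1w : 1 - ‖w v τ‖ ≤ ‖1 - w v τ‖ := by
        have := norm_sub_norm_le (1 : ℂ) (w v τ)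
        simpa using this
      have hwabs : ‖w v τ‖ = Real.exp (x * l) := by
        rw [abs_w, ← hl_def, ← hx_def]
      have hNx : (1:ℝ) ≤ x * N := (div_le_iff₀ hN0).mp hxN
      have hkey : 1.8354 / (N:ℝ) ≤ 2 * x * (1 - σ) := by
        rw [div_le_iff₀ hN0]
        nlinarith
      calc 1.8354 / (N:ℝ) ≤ 2 * x * (1 - σ) := hkey
      _ ≤ 1 - Real.exp (x * l) := by nlinarith [hch]
      _ = 1 - ‖w v τ‖ := by rw [hwabs]
      _ ≤ ‖1 - w v τ‖ := h1w
    · have h2 := front_circle N hN v τ hc hy (fun ⟨k, hk⟩ => hv ⟨0, k, by rw [hc]; norm_num, hk⟩)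
      calc 1.8354 / (N:ℝ) ≤ 2 / (N:ℝ) := by gcongr <;> norm_num
      _ ≤ _ := h2
  -- assembly
  have hpre : l / 12 ≤ (x ^ 2 - x + 1 / 6) / 2 * l := by
    nlinarith [mul_nonneg (by nlinarith : (0:ℝ) ≤ x - x ^ 2) (by linarith : (0:ℝ) ≤ -l)]
  have hPsi_eq : Psi v τ = ((x ^ 2 - x + 1 / 6) / 2 * l + ∑' n, A v τ n + ∑' n, B v τ n)
      + Real.log (‖1 - w v τ‖) := by
    unfold Psi
    rw [← hl_def, ← hx_def]
    ring
  have hexp_split : Real.exp (Psi v τ)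
      = Real.exp ((x ^ 2 - x + 1 / 6) / 2 * l + ∑' n, A v τ n + ∑' n, B v τ n)
        * ‖1 - w v τ‖ := by
    rw [hPsi_eq, Real.exp_add, Real.exp_log hfrontpos]
  have hmain : Real.exp (l / 12) * 0.667
      ≤ Real.exp ((x ^ 2 - x + 1 / 6) / 2 * l + ∑' n, A v τ n + ∑' n, B v τ n) := by
    have hsum : l / 12 + (-0.332) ≤ (x ^ 2 - x + 1 / 6) / 2 * l + ∑' n, A v τ n
        + ∑' n, B v τ n := by
      linarith [hpre, hsumA, hsumB, hnum]
    calc Real.exp (l / 12) * 0.667 ≤ Real.exp (l / 12) * Real.exp (-0.332) := by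
          have := Real.add_one_le_exp (-0.332 : ℝ)
          nlinarith [Real.exp_pos (l / 12)]
    _ = Real.exp (l / 12 + (-0.332)) := (Real.exp_add _ _).symm
    _ ≤ _ := Real.exp_le_exp.mpr hsum
  have hEpos : 0 < Real.exp (l / 12) := Real.exp_pos _
  calc 0.76 * Real.exp (l / 12) / N < (0.667 * 1.8354) * Real.exp (l / 12) / N := by
        apply (div_lt_div_iff_of_pos_right hN0).mpr
        nlinarith [hEpos]
  _ ≤ Real.exp (Psi v τ) := by
        rw [hexp_split]
        rw [show (0.667 * 1.8354) * Real.exp (l / 12) / (N:ℝ)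
            = (Real.exp (l / 12) * 0.667) * (1.8354 / N) by ring]
        exact mul_le_mul hmain hfront (by positivity) (Real.exp_pos _).le

lemma final_glue (N : ℕ) (hN : 2 ≤ N) (v v' : ℚ × ℚ) {τ : ℂ} (hτ : 0 < τ.im)
    (hq : Real.exp (L τ) ≤ Real.exp (-Real.pi * Real.sqrt 3))
    (hv : ¬∃ m n : ℤ, v.1 = (m : ℚ) ∧ v.2 = (n : ℚ))
    (hEq : Psi v τ = Psi v' τ)
    (hv' : ¬∃ m n : ℤ, v'.1 = (m : ℚ) ∧ v'.2 = (n : ℚ))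
    (hx0 : 0 ≤ v'.1) (hx2 : v'.1 ≤ 1 / 2)
    (hcase : (1 : ℚ) / N ≤ v'.1 ∨ v'.1 = 0) (hy : ∃ b : ℤ, v'.2 = (b : ℚ) / N) :
    ‖siegelFunction v τ‖ >
      0.76 * ‖Complex.exp (2 * (Real.pi : ℂ) * Complex.I * τ)‖ ^ ((1 : ℝ) / 12) / N := by
  have habsq : ‖Complex.exp (2 * (Real.pi : ℂ) * Complex.I * τ)‖
      = Real.exp (L τ) := abs_q τ
  have hrpow : ‖Complex.exp (2 * (Real.pi : ℂ) * Complex.I * τ)‖ ^ ((1 : ℝ) / 12)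
      = Real.exp (L τ / 12) := by
    rw [habsq, ← Real.exp_mul]
    congr 1
    ring
  rw [hrpow, abs_siegel hτ hv, hEq]
  exact Psi_est N hN v' hτ hq hv' hx0 hx2 hcase hy

end
end SG

open SG

theorem siegel_abs_gt (N : ℕ) (hN : 2 ≤ N) (v : ℚ × ℚ)
    (hvN : ∃ a b : ℤ, v.1 = (a : ℚ) / N ∧ v.2 = (b : ℚ) / N)
    (hv : ¬∃ m n : ℤ, v.1 = (m : ℚ) ∧ v.2 = (n : ℚ))
    (τ : ℂ) (hτ : 0 < τ.im)
    (hq : ‖Complex.exp (2 * (Real.pi : ℂ) * Complex.I * τ)‖ ≤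
      Real.exp (-Real.pi * Real.sqrt 3)) :
    ‖siegelFunction v τ‖ >
      0.76 * ‖Complex.exp (2 * (Real.pi : ℂ) * Complex.I * τ)‖ ^ ((1 : ℝ) / 12) / N := by
  obtain ⟨a, b, ha, hb⟩ := hvN
  have hNQ : ((N : ℚ)) ≠ 0 := by positivity
  have hNZ : (0 : ℤ) < (N : ℤ) := by positivity
  have hqL : Real.exp (SG.L τ) ≤ Real.exp (-Real.pi * Real.sqrt 3) := by
    rwa [show ‖Complex.exp (2 * (Real.pi : ℂ) * Complex.I * τ)‖
      = Real.exp (SG.L τ) from SG.abs_q τ] at hq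
  set r := a % (N : ℤ) with hr_def
  set k := a / (N : ℤ) with hk_def
  have hr0 : 0 ≤ r := Int.emod_nonneg a hNZ.ne'
  have hrN : r < N := Int.emod_lt_of_pos a hNZ
  have hva : v.1 = (r : ℚ) / N + (k : ℚ) := by
    rw [ha]
    have hbe : a = (N : ℤ) * k + r := by
      rw [hk_def, hr_def]; exact (Int.mul_ediv_add_emod a (N : ℤ)).symm
    have haq : ((a : ℚ)) = (N : ℚ) * (k : ℚ) + (r : ℚ) := by
      exact_mod_cast congrArg (fun z : ℤ => (z : ℚ)) hbe
    rw [haq]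
    field_simp
    ring
  have hveq : v = ((r : ℚ) / N + (k : ℚ), v.2) := by
    rw [← hva]
  have hshift : Psi v τ = Psi ((r : ℚ) / N, v.2) τ := by
    rw [hveq]
    exact Psi_int_shift ((r : ℚ) / N, v.2) hτ k
  by_cases hhalf : 2 * r ≤ (N : ℤ)
  · apply final_glue N hN v ((r : ℚ) / N, v.2) hτ hqL hv hshift
    · rintro ⟨m, n, h1, h2⟩
      have h1' : (r : ℚ) / N = (m : ℚ) := h1
      refine hv ⟨m + k, n, ?_, h2⟩
      rw [hva, h1']
      push_cast
      ring
    · show (0 : ℚ) ≤ (r : ℚ) / N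
      positivity
    · show (r : ℚ) / N ≤ 1 / 2
      rw [div_le_div_iff₀ (by positivity) (by norm_num)]
      have h2r : ((2 * r : ℤ) : ℚ) ≤ ((N : ℤ) : ℚ) := by exact_mod_cast hhalf
      push_cast at h2r ⊢
      linarith
    · rcases eq_or_lt_of_le hr0 with h0 | h0
      · right
        show (r : ℚ) / N = 0
        rw [← h0]
        norm_num
      · left
        show (1 : ℚ) / N ≤ (r : ℚ) / N
        gcongr
        have h1 : (1 : ℤ) ≤ r := h0
        exact_mod_cast h1
    · exact ⟨b, hb⟩
  · push_neg at hhalf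
    set s' := (N : ℤ) - r with hs_def
    have hr1 : 1 ≤ r := by omega
    have hs1 : 1 ≤ s' := by omega
    have hsN : 2 * s' ≤ (N : ℤ) := by omega
    have hs'ub : s' ≤ (N : ℤ) - 1 := by omega
    have hfst : -((r : ℚ) / N) + ((1 : ℤ) : ℚ) = (s' : ℚ) / N := by
      rw [hs_def]
      push_cast
      field_simp
      ring
    have h3 : Psi (-((r : ℚ) / N), -v.2) τ = Psi ((r : ℚ) / N, v.2) τ := by
      have := Psi_neg ((r : ℚ) / N, v.2) hτ
      simpa using this
    have h2 : Psi ((s' : ℚ) / N, -v.2) τ = Psi (-((r : ℚ) / N), -v.2) τ := by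
      rw [show ((s' : ℚ) / N : ℚ) = -((r : ℚ) / N) + ((1 : ℤ) : ℚ) from hfst.symm]
      exact Psi_int_shift (-((r : ℚ) / N), -v.2) hτ 1
    have hEq2 : Psi v τ = Psi ((s' : ℚ) / N, -v.2) τ := by
      rw [hshift, ← h3, ← h2]
    apply final_glue N hN v ((s' : ℚ) / N, -v.2) hτ hqL hv hEq2
    · rintro ⟨m, n, h1, h2⟩
      have h1' : (s' : ℚ) / N = (m : ℚ) := h1
      rw [div_eq_iff hNQ] at h1'
      have hsmZ : s' = m * N := by exact_mod_cast h1'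
      rcases le_or_gt m 0 with hm | hm
      · nlinarith
      · nlinarith
    · show (0 : ℚ) ≤ (s' : ℚ) / N
      have : (0 : ℚ) ≤ (s' : ℚ) := by exact_mod_cast (by omega : (0 : ℤ) ≤ s')
      positivity
    · show (s' : ℚ) / N ≤ 1 / 2
      rw [div_le_div_iff₀ (by positivity) (by norm_num)]
      have h2s : ((2 * s' : ℤ) : ℚ) ≤ ((N : ℤ) : ℚ) := by exact_mod_cast hsN
      push_cast at h2s ⊢
      linarith
    · left
      show (1 : ℚ) / N ≤ (s' : ℚ) / N
      gcongr
      exact_mod_cast hs1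
    · exact ⟨-b, by show -v.2 = ((-b : ℤ) : ℚ) / N; rw [hb]; push_cast; ring⟩
end

section
/- For every real number s with 0 < s ≤ e^{−π√3}, one has ∏_{n=1}^∞ (1 + s^{n−1/2})² ≤ e^{2√s/(1−s)} and 2·e^{2√s/(1−s)} < 2.29. -/
theorem prod_one_add_le (s : ℝ) (hs : 0 < s) (hs' : s ≤ Real.exp (-Real.pi * Real.sqrt 3)) :
    (∏' n : ℕ, (1 + s ^ ((n : ℝ) + 1 / 2)) ^ 2) ≤ Real.exp (2 * Real.sqrt s / (1 - s)) ∧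
    2 * Real.exp (2 * Real.sqrt s / (1 - s)) < 2.29 := by
  -- basic facts
  have hsqrt3 : (1.732 : ℝ) < Real.sqrt 3 := by
    rw [show (1.732 : ℝ) = Real.sqrt (1.732 ^ 2) by
      rw [Real.sqrt_sq (by norm_num)]]
    exact Real.sqrt_lt_sqrt (by positivity) (by norm_num)
  have hpi : (3.141592 : ℝ) < Real.pi := Real.pi_gt_d6
  have hexp_arg : (5.441 : ℝ) < Real.pi * Real.sqrt 3 := by
    calc (5.441 : ℝ) < 3.141592 * 1.732 := by norm_num
    _ < Real.pi * Real.sqrt 3 := by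
        apply mul_lt_mul hpi hsqrt3.le (by norm_num) Real.pi_pos.le
  -- exp(5.441) > 230
  have h230 : (230 : ℝ) < Real.exp 5.441 := by
    have h5 : Real.exp 5.441 = Real.exp 1 ^ 5 * Real.exp 0.441 := by
      rw [← Real.exp_nat_mul, ← Real.exp_add]; norm_num
    have he1 : (2.7182818283 : ℝ) < Real.exp 1 := Real.exp_one_gt_d9
    have htaylor : (1.5525 : ℝ) ≤ Real.exp 0.441 := by
      have := Real.sum_le_exp_of_nonneg (x := 0.441) (by norm_num) 4
      simp [Finset.sum_range_succ] at this
      norm_num [Nat.factorial] at this ⊢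
      linarith
    rw [h5]
    calc (230 : ℝ) < 2.7182818283 ^ 5 * 1.5525 := by norm_num
    _ ≤ Real.exp 1 ^ 5 * Real.exp 0.441 := by
        apply mul_le_mul (by gcongr <;> norm_num) htaylor (by norm_num) (by positivity)
  -- s < 1/230
  have hs230 : s < 1 / 230 := by
    apply lt_of_le_of_lt hs'
    rw [neg_mul, Real.exp_neg, inv_lt_comm₀ (Real.exp_pos _) (by norm_num)]
    calc ((1:ℝ)/230)⁻¹ = 230 := by norm_num
    _ < Real.exp 5.441 := h230
    _ < Real.exp (Real.pi * Real.sqrt 3) := Real.exp_lt_exp.mpr hexp_arg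
  have hs1 : s < 1 := lt_trans hs230 (by norm_num)
  -- rewrite the powers
  have hx_eq : ∀ n : ℕ, s ^ ((n : ℝ) + 1 / 2) = Real.sqrt s * s ^ n := by
    intro n
    rw [Real.rpow_add hs, Real.rpow_natCast, Real.sqrt_eq_rpow, mul_comm]
  have hxpos : ∀ n : ℕ, 0 < s ^ ((n : ℝ) + 1 / 2) := fun n => Real.rpow_pos_of_pos hs _
  -- summability of the geometric bound
  have hsumx : Summable (fun n : ℕ => Real.sqrt s * s ^ n) :=
    (summable_geometric_of_lt_one hs.le hs1).mul_left _
  have htsumx : ∑' n : ℕ, Real.sqrt s * s ^ n = Real.sqrt s * (1 - s)⁻¹ := by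
    rw [tsum_mul_left, tsum_geometric_of_lt_one hs.le hs1]
  -- log bounds
  have hlog_nonneg : ∀ n : ℕ, 0 ≤ Real.log (1 + s ^ ((n : ℝ) + 1 / 2)) := by
    intro n
    apply Real.log_nonneg
    linarith [(hxpos n)]
  have hlog_le : ∀ n : ℕ, Real.log (1 + s ^ ((n : ℝ) + 1 / 2)) ≤ Real.sqrt s * s ^ n := by
    intro n
    rw [hx_eq n]
    have := Real.log_le_sub_one_of_pos (x := 1 + Real.sqrt s * s ^ n)
      (by have := hxpos n; rw [hx_eq n] at this; positivity)
    linarith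
  have hsumlog : Summable (fun n : ℕ => Real.log (1 + s ^ ((n : ℝ) + 1 / 2))) :=
    Summable.of_nonneg_of_le hlog_nonneg hlog_le hsumx
  have hsumlog2 : Summable (fun n : ℕ => Real.log ((1 + s ^ ((n : ℝ) + 1 / 2)) ^ 2)) := by
    have : (fun n : ℕ => Real.log ((1 + s ^ ((n : ℝ) + 1 / 2)) ^ 2)) =
        fun n : ℕ => 2 * Real.log (1 + s ^ ((n : ℝ) + 1 / 2)) := by
      funext n
      rw [Real.log_pow]
      push_cast
      ring
    rw [this]
    exact hsumlog.mul_left 2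
  -- the product equals exp of the sum of logs
  have hprod : HasProd (fun n : ℕ => (1 + s ^ ((n : ℝ) + 1 / 2)) ^ 2)
      (Real.exp (∑' n : ℕ, Real.log ((1 + s ^ ((n : ℝ) + 1 / 2)) ^ 2))) := by
    have key := hsumlog2.hasSum.rexp
    have heq : (Real.exp ∘ fun n : ℕ => Real.log ((1 + s ^ ((n : ℝ) + 1 / 2)) ^ 2)) =
        fun n : ℕ => (1 + s ^ ((n : ℝ) + 1 / 2)) ^ 2 := by
      funext n
      simp only [Function.comp]
      rw [Real.exp_log (by have := hxpos n; positivity)]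
    rwa [heq] at key
  have htprod_eq : (∏' n : ℕ, (1 + s ^ ((n : ℝ) + 1 / 2)) ^ 2) =
      Real.exp (∑' n : ℕ, Real.log ((1 + s ^ ((n : ℝ) + 1 / 2)) ^ 2)) := hprod.tprod_eq
  -- bound the sum of logs
  have hsum_bound : (∑' n : ℕ, Real.log ((1 + s ^ ((n : ℝ) + 1 / 2)) ^ 2)) ≤
      2 * Real.sqrt s / (1 - s) := by
    have h1 : (∑' n : ℕ, Real.log ((1 + s ^ ((n : ℝ) + 1 / 2)) ^ 2)) ≤
        ∑' n : ℕ, 2 * (Real.sqrt s * s ^ n) := by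
      apply Summable.tsum_le_tsum _ hsumlog2 (hsumx.mul_left 2)
      intro n
      rw [Real.log_pow]
      push_cast
      linarith [hlog_le n]
    have h2 : (∑' n : ℕ, 2 * (Real.sqrt s * s ^ n)) = 2 * Real.sqrt s / (1 - s) := by
      rw [tsum_mul_left, htsumx]
      field_simp
    linarith
  constructor
  · rw [htprod_eq]
    exact Real.exp_le_exp.mpr hsum_bound
  · -- numeric bound: 2 * exp(2√s/(1-s)) < 2.29
    have hsqrt_s : Real.sqrt s < 0.066 := by
      rw [Real.sqrt_lt' (by norm_num)]
      calc s < 1 / 230 := hs230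
      _ < 0.066 ^ 2 := by norm_num
    have hden : (229 : ℝ) / 230 < 1 - s := by linarith
    have harg : 2 * Real.sqrt s / (1 - s) < 0.1326 := by
      rw [div_lt_iff₀ (by linarith : (0:ℝ) < 1 - s)]
      nlinarith [hsqrt_s, hden]
    have hexp_lt : Real.exp (2 * Real.sqrt s / (1 - s)) < Real.exp 0.1326 :=
      Real.exp_lt_exp.mpr harg
    have hexp_ub : Real.exp 0.1326 ≤ 1.1425 := by
      have := Real.exp_bound' (x := 0.1326) (by norm_num) (by norm_num) (n := 3) (by norm_num)
      simp [Finset.sum_range_succ] at this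
      norm_num [Nat.factorial] at this ⊢
      linarith
    linarith
end

section
/- For every real number s with 0 < s ≤ e^{−π√3}, one has ∏_{n=1}^∞ (1 − s^{n−1/2})² ≥ e^{−4√s/(1−s)} and e^{−4√s/(1−s)} > 0.76. -/
open Real

theorem prod_one_sub_ge (s : ℝ) (hs : 0 < s) (hs' : s ≤ Real.exp (-Real.pi * Real.sqrt 3)) :
    Real.exp (-4 * Real.sqrt s / (1 - s)) ≤ (∏' n : ℕ, (1 - s ^ ((n : ℝ) + 1 / 2)) ^ 2) ∧
    0.76 < Real.exp (-4 * Real.sqrt s / (1 - s)) := by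
  -- Numeric bound: s < 1/225
  have h3 : (1.732 : ℝ) < Real.sqrt 3 := by
    rw [show (1.732 : ℝ) = Real.sqrt (1.732 ^ 2) by
      rw [Real.sqrt_sq]; norm_num]
    apply Real.sqrt_lt_sqrt <;> norm_num
  have hpi : (3.141592 : ℝ) < Real.pi := Real.pi_gt_d6
  have hpi3 : (5.441 : ℝ) < Real.pi * Real.sqrt 3 := by
    nlinarith [Real.sqrt_nonneg 3]
  have hexp441 : (1.11025 : ℝ) ^ 4 ≤ Real.exp 0.441 := by
    have h1 : (1.11025 : ℝ) ≤ Real.exp 0.11025 := by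
      have := Real.add_one_le_exp (0.11025 : ℝ); linarith
    calc (1.11025 : ℝ) ^ 4 ≤ Real.exp 0.11025 ^ 4 := by
          apply pow_le_pow_left₀ (by norm_num) h1
      _ = Real.exp 0.441 := by
          rw [← Real.exp_nat_mul]; norm_num
  have hexp5 : (148.413 : ℝ) < Real.exp 1 ^ 5 := by
    calc (148.413 : ℝ) < 2.7182818283 ^ 5 := by norm_num
      _ ≤ Real.exp 1 ^ 5 := pow_le_pow_left₀ (by norm_num) Real.exp_one_gt_d9.le 5
  have hexpbig : (225 : ℝ) < Real.exp 5.441 := by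
    have heq : Real.exp (5.441 : ℝ) = Real.exp 1 ^ 5 * Real.exp 0.441 := by
      rw [← Real.exp_nat_mul, ← Real.exp_add]; norm_num
    rw [heq]
    nlinarith [Real.exp_pos (0.441 : ℝ)]
  have hs225 : s < 1 / 225 := by
    have h1 : s ≤ Real.exp (-5.441) := by
      refine hs'.trans (Real.exp_le_exp.2 ?_)
      nlinarith
    have h2 : Real.exp (-5.441 : ℝ) * Real.exp (5.441 : ℝ) = 1 := by
      rw [← Real.exp_add]; norm_num
    nlinarith [Real.exp_pos (-5.441 : ℝ)]
  have hs1 : s < 1 := by linarith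
  set r := Real.sqrt s with hr_def
  have hr0 : 0 < r := Real.sqrt_pos.2 hs
  have hr15 : r < 1 / 15 := by
    rw [hr_def, Real.sqrt_lt' (by norm_num)]
    nlinarith
  -- rewrite the rpow
  have hx : ∀ n : ℕ, s ^ ((n : ℝ) + 1 / 2) = s ^ n * r := by
    intro n
    rw [Real.rpow_add hs, Real.rpow_natCast, hr_def, Real.sqrt_eq_rpow]
  have hxpos : ∀ n : ℕ, 0 < s ^ n * r := fun n => mul_pos (pow_pos hs n) hr0
  have hxle : ∀ n : ℕ, s ^ n * r ≤ 1 / 2 := by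
    intro n
    have h1 : s ^ n ≤ 1 := pow_le_one₀ hs.le hs1.le
    nlinarith [hxpos n, pow_pos hs n]
  -- key inequality : exp (-2x) ≤ 1 - x for 0 ≤ x ≤ 1/2
  have key : ∀ x : ℝ, 0 ≤ x → x ≤ 1 / 2 → Real.exp (-(2 * x)) ≤ 1 - x := by
    intro x h0 h1
    have h2 := Real.add_one_le_exp (2 * x)
    have h3 : Real.exp (-(2 * x)) * Real.exp (2 * x) = 1 := by
      rw [← Real.exp_add]; simp
    nlinarith [Real.exp_pos (-(2 * x)), Real.exp_pos (2 * x)]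
  have hfpos : ∀ n : ℕ, 0 < (1 - s ^ n * r) ^ 2 := by
    intro n
    have h1 := hxle n
    have h2 : (0:ℝ) < 1 - s ^ n * r := by linarith
    positivity
  -- log bounds
  have hlog : ∀ n : ℕ, -(4 * (s ^ n * r)) ≤ Real.log ((1 - s ^ n * r) ^ 2) ∧
      Real.log ((1 - s ^ n * r) ^ 2) ≤ 0 := by
    intro n
    have hx0 := (hxpos n).le
    have hx2 := hxle n
    have h1 : Real.exp (-(2 * (s ^ n * r))) ≤ 1 - s ^ n * r := key _ hx0 hx2
    have h2 : -(2 * (s ^ n * r)) ≤ Real.log (1 - s ^ n * r) := by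
      have := Real.log_le_log (Real.exp_pos _) h1
      rwa [Real.log_exp] at this
    have h3 : Real.log (1 - s ^ n * r) ≤ 0 :=
      Real.log_nonpos (by linarith) (by linarith)
    rw [Real.log_pow]
    constructor <;> push_cast <;> nlinarith
  -- summability
  have hgeo : HasSum (fun n : ℕ => s ^ n * r) ((1 - s)⁻¹ * r) :=
    (hasSum_geometric_of_lt_one hs.le hs1).mul_right r
  have hsummable : Summable (fun n : ℕ => Real.log ((1 - s ^ n * r) ^ 2)) := by
    rw [← summable_neg_iff]
    apply Summable.of_nonneg_of_le
      (fun n => by simpa using (hlog n).2)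
      (fun n => by have := (hlog n).1; linarith)
      (hgeo.summable.mul_left 4)
  set S := ∑' n : ℕ, Real.log ((1 - s ^ n * r) ^ 2) with hS_def
  have hprod : HasProd (fun n : ℕ => (1 - s ^ n * r) ^ 2) (Real.exp S) := by
    have h := hsummable.hasSum.rexp
    have heq : (Real.exp ∘ fun n : ℕ => Real.log ((1 - s ^ n * r) ^ 2)) =
        fun n : ℕ => (1 - s ^ n * r) ^ 2 :=
      funext fun n => Real.exp_log (hfpos n)
    rwa [heq] at h
  -- compare sums
  have hsum4 : HasSum (fun n : ℕ => -(4 * (s ^ n * r))) (-4 * r / (1 - s)) := by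
    have h := hgeo.mul_left (-4)
    have e1 : (fun n : ℕ => -(4 * (s ^ n * r))) = fun n : ℕ => -4 * (s ^ n * r) := by
      funext n; ring
    have e2 : -4 * ((1 - s)⁻¹ * r) = -4 * r / (1 - s) := by
      field_simp
    rw [e1, ← e2]; exact h
  have hSle : -4 * r / (1 - s) ≤ S :=
    hasSum_le (fun n => (hlog n).1) hsum4 hsummable.hasSum
  constructor
  · have htp : (∏' n : ℕ, (1 - s ^ ((n : ℝ) + 1 / 2)) ^ 2) = Real.exp S := by
      rw [show (fun n : ℕ => (1 - s ^ ((n : ℝ) + 1 / 2)) ^ 2) =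
          fun n : ℕ => (1 - s ^ n * r) ^ 2 from funext fun n => by rw [hx n]]
      exact hprod.tprod_eq
    rw [htp]
    exact Real.exp_le_exp.2 (by linarith [hSle])
  · have ht : -(15 / 56 : ℝ) ≤ -4 * r / (1 - s) := by
      rw [neg_mul, neg_div, neg_le_neg_iff, div_le_iff₀ (by linarith)]
      nlinarith
    have h8 : (433 / 448 : ℝ) ^ 8 ≤ Real.exp (-(15 / 56)) := by
      have h1 : (433 / 448 : ℝ) ≤ Real.exp (-(15 / 448)) := by
        have := Real.add_one_le_exp (-(15 / 448) : ℝ); linarith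
      calc (433 / 448 : ℝ) ^ 8 ≤ Real.exp (-(15 / 448)) ^ 8 :=
            pow_le_pow_left₀ (by norm_num) h1 8
        _ = Real.exp (-(15 / 56)) := by rw [← Real.exp_nat_mul]; norm_num
    have h9 : (0.76 : ℝ) < (433 / 448 : ℝ) ^ 8 := by norm_num
    calc (0.76 : ℝ) < (433 / 448 : ℝ) ^ 8 := h9
      _ ≤ Real.exp (-(15 / 56)) := h8
      _ ≤ Real.exp (-4 * r / (1 - s)) := Real.exp_le_exp.2 ht
end
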